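/- Let X_{ζ₁}, X_{ζ₂}, X_{γ²₁}, X_{γ⁰₁} ∈ g be the matrices obtained by setting the indicated parameter equal to 1 and all other parameters equal to 0. Then the 4-dimensional subspace span{X_{ζ₁}, X_{ζ₂}, X_{γ²₁}, X_{γ⁰₁}} is closed under the matrix commutator, i.e. it is a Lie subalgebra of g. (Equivalently, the complementary left-invariant Pfaffian system spanned by the forms θ¹, θ², ω⁰, ω¹′, ω²′, γ¹₂, γ⁰₂, γ, γ₁, γ₂ on the corresponding Lie group is Frobenius; this subalgebra is the Lie algebra of the structure group G⁽²⁾_M of the reductions appearing in the main embeddability theorem.) -/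

import Mathlib

noncomputable section

open Module

/-- The matrix of the Maurer–Cartan form of `G₂` in its 7-dimensional representation,
as a function of the 14 coframe parameters
`θ¹, θ², ω⁰, ω¹′, ω²′, γ¹₂, ζ₁, ζ₂, γ²₁, γ⁰₁, γ⁰₂, γ, γ₁, γ₂`. -/
def g2mat (t1 t2 w0 w1 w2 g12 z1 z2 g21 g01 g02 gm gam1 gam2 : ℝ) :
    Matrix (Fin 7) (Fin 7) ℝ :=
  !![-z2 - 2*z1, g02, -g01, -(Real.sqrt 2)*gm, gam2, gam1, 0;
     w2, -z2 - z1, -g21, -(Real.sqrt 2)*g01, gm, 0, -gam1;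
     -w1, -g12, -z1, -(Real.sqrt 2)*g02, 0, -gm, -gam2;
     (Real.sqrt 2)*w0, -(Real.sqrt 2)*w1, -(Real.sqrt 2)*w2, 0,
       (Real.sqrt 2)*g02, (Real.sqrt 2)*g01, (Real.sqrt 2)*gm;
     t2, -w0, 0, (Real.sqrt 2)*w2, z1, g21, g01;
     t1, 0, w0, (Real.sqrt 2)*w1, g12, z2 + z1, -g02;
     0, -t1, -t2, -(Real.sqrt 2)*w0, w1, -w2, z2 + 2*z1]

/-- The split exceptional Lie algebra `g₂ ⊆ Mat₇(ℝ)`, as the set of all matrices of the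
above form. -/
def g2Set : Set (Matrix (Fin 7) (Fin 7) ℝ) :=
  {X | ∃ t1 t2 w0 w1 w2 g12 z1 z2 g21 g01 g02 gm gam1 gam2 : ℝ,
    X = g2mat t1 t2 w0 w1 w2 g12 z1 z2 g21 g01 g02 gm gam1 gam2}

/-- `X_{ζ₁}`: the coframe dual vector with `ζ₁ = 1` and all other parameters `0`. -/
def Xzeta1 : Matrix (Fin 7) (Fin 7) ℝ := g2mat 0 0 0 0 0 0 1 0 0 0 0 0 0 0

/-- `X_{ζ₂}` -/
def Xzeta2 : Matrix (Fin 7) (Fin 7) ℝ := g2mat 0 0 0 0 0 0 0 1 0 0 0 0 0 0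

/-- `X_{γ²₁}` -/
def Xgamma21 : Matrix (Fin 7) (Fin 7) ℝ := g2mat 0 0 0 0 0 0 0 0 1 0 0 0 0 0

/-- `X_{γ⁰₁}` -/
def Xgamma01 : Matrix (Fin 7) (Fin 7) ℝ := g2mat 0 0 0 0 0 0 0 0 0 1 0 0 0 0

attribute [local instance 100] LieRing.ofAssociativeRing

section VecHelpers
variable {α : Type*}
lemma vec7c0 (a b c d e f g : α) : ![a,b,c,d,e,f,g] 0 = a := rfl
lemma vec7c1 (a b c d e f g : α) : ![a,b,c,d,e,f,g] 1 = b := rfl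
lemma vec7c2 (a b c d e f g : α) : ![a,b,c,d,e,f,g] 2 = c := rfl
lemma vec7c3 (a b c d e f g : α) : ![a,b,c,d,e,f,g] 3 = d := rfl
lemma vec7c4 (a b c d e f g : α) : ![a,b,c,d,e,f,g] 4 = e := rfl
lemma vec7c5 (a b c d e f g : α) : ![a,b,c,d,e,f,g] 5 = f := rfl
lemma vec7c6 (a b c d e f g : α) : ![a,b,c,d,e,f,g] 6 = g := rfl
lemma consv5 (x : α) (u : Fin 6 → α) :
    Matrix.vecCons x u 5 = Matrix.vecHead
      (Matrix.vecTail (Matrix.vecTail (Matrix.vecTail (Matrix.vecTail u)))) := rfl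
lemma consv6 (x : α) (u : Fin 6 → α) :
    Matrix.vecCons x u 6 = Matrix.vecHead
      (Matrix.vecTail (Matrix.vecTail (Matrix.vecTail (Matrix.vecTail (Matrix.vecTail u))))) := rfl
end VecHelpers

set_option maxHeartbeats 1600000 in
open Matrix in
lemma X1_eq : Xzeta1 = Matrix.diagonal ![-2,-1,-1,0,1,1,2] := by
  ext i j
  fin_cases i <;> fin_cases j <;>
    simp [Xzeta1, g2mat, Matrix.diagonal, Matrix.vecHead, Matrix.vecTail,
      vec7c0, vec7c1, vec7c2, vec7c3, vec7c4, vec7c5, vec7c6, consv5, consv6] <;> norm_num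

set_option maxHeartbeats 1600000 in
open Matrix in
lemma X2_eq : Xzeta2 = Matrix.diagonal ![-1,-1,0,0,0,1,1] := by
  ext i j
  fin_cases i <;> fin_cases j <;>
    simp [Xzeta2, g2mat, Matrix.diagonal, Matrix.vecHead, Matrix.vecTail,
      vec7c0, vec7c1, vec7c2, vec7c3, vec7c4, vec7c5, vec7c6, consv5, consv6] <;> norm_num

set_option maxHeartbeats 1600000 in
open Matrix in
lemma X3_eq : Xgamma21 = -(single 1 2 (1:ℝ)) + single 4 5 (1:ℝ) := by
  ext i j
  fin_cases i <;> fin_cases j <;>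
    simp [Xgamma21, g2mat, Matrix.single, Matrix.vecHead, Matrix.vecTail,
      vec7c0, vec7c1, vec7c2, vec7c3, vec7c4, vec7c5, vec7c6, consv5, consv6] <;> norm_num

set_option maxHeartbeats 1600000 in
open Matrix in
lemma X4_eq : Xgamma01 = -(single 0 2 (1:ℝ))
    - Real.sqrt 2 • single 1 3 (1:ℝ)
    + Real.sqrt 2 • single 3 5 (1:ℝ) + single 4 6 (1:ℝ) := by
  ext i j
  fin_cases i <;> fin_cases j <;>
    simp [Xgamma01, g2mat, Matrix.single, Matrix.vecHead, Matrix.vecTail,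
      vec7c0, vec7c1, vec7c2, vec7c3, vec7c4, vec7c5, vec7c6, consv5, consv6] <;> norm_num

open Matrix in
lemma lie_diag_E (d : Fin 7 → ℝ) (i j : Fin 7) (c : ℝ) :
    ⁅Matrix.diagonal d, single i j c⁆ = (d i - d j) • single i j c := by
  rw [Ring.lie_def]
  ext k l
  rw [Matrix.sub_apply, Matrix.diagonal_mul, Matrix.mul_diagonal, Matrix.smul_apply]
  by_cases h : i = k ∧ j = l
  · obtain ⟨rfl, rfl⟩ := h
    rw [Matrix.single_apply_same, smul_eq_mul]
    ring
  · rw [Matrix.single_apply_of_ne _ _ _ _ _ h]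
    simp

open Matrix in
lemma lie_E_E {i j k l : Fin 7} (h : j ≠ k) (h' : l ≠ i) (c c' : ℝ) :
    ⁅(single i j c : Matrix (Fin 7) (Fin 7) ℝ), single k l c'⁆ = 0 := by
  rw [Ring.lie_def, Matrix.single_mul_single_of_ne (h := h), Matrix.single_mul_single_of_ne (h := h'),
    sub_zero]

lemma b12 : ⁅Xzeta1, Xzeta2⁆ = 0 := by
  rw [Ring.lie_def, X1_eq, X2_eq, Matrix.diagonal_mul_diagonal, Matrix.diagonal_mul_diagonal]
  rw [show (fun i => ![(-2:ℝ),-1,-1,0,1,1,2] i * ![-1,-1,0,0,0,1,1] i)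
      = fun i => ![(-1:ℝ),-1,0,0,0,1,1] i * ![-2,-1,-1,0,1,1,2] i from
    funext fun i => mul_comm _ _, sub_self]

lemma b13 : ⁅Xzeta1, Xgamma21⁆ = 0 := by
  rw [X1_eq, X3_eq]
  simp only [lie_add, lie_neg, lie_diag_E,
    vec7c0, vec7c1, vec7c2, vec7c3, vec7c4, vec7c5, vec7c6]
  module

lemma b14 : ⁅Xzeta1, Xgamma01⁆ = -Xgamma01 := by
  rw [X1_eq, X4_eq]
  simp only [lie_add, lie_sub, lie_neg, lie_smul, lie_diag_E,
    vec7c0, vec7c1, vec7c2, vec7c3, vec7c4, vec7c5, vec7c6]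
  module

lemma b23 : ⁅Xzeta2, Xgamma21⁆ = -Xgamma21 := by
  rw [X2_eq, X3_eq]
  simp only [lie_add, lie_sub, lie_neg, lie_smul, lie_diag_E,
    vec7c0, vec7c1, vec7c2, vec7c3, vec7c4, vec7c5, vec7c6]
  module

lemma b24 : ⁅Xzeta2, Xgamma01⁆ = -Xgamma01 := by
  rw [X2_eq, X4_eq]
  simp only [lie_add, lie_sub, lie_neg, lie_smul, lie_diag_E,
    vec7c0, vec7c1, vec7c2, vec7c3, vec7c4, vec7c5, vec7c6]
  module

lemma b34 : ⁅Xgamma21, Xgamma01⁆ = 0 := by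
  rw [X3_eq, X4_eq]
  simp only [lie_add, lie_sub, lie_neg, lie_smul, add_lie, sub_lie, neg_lie, smul_lie]
  rw [lie_E_E (i:=1) (j:=2) (k:=0) (l:=2) (by decide) (by decide),
    lie_E_E (i:=4) (j:=5) (k:=0) (l:=2) (by decide) (by decide),
    lie_E_E (i:=1) (j:=2) (k:=1) (l:=3) (by decide) (by decide),
    lie_E_E (i:=4) (j:=5) (k:=1) (l:=3) (by decide) (by decide),
    lie_E_E (i:=1) (j:=2) (k:=3) (l:=5) (by decide) (by decide),
    lie_E_E (i:=4) (j:=5) (k:=3) (l:=5) (by decide) (by decide),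
    lie_E_E (i:=1) (j:=2) (k:=4) (l:=6) (by decide) (by decide),
    lie_E_E (i:=4) (j:=5) (k:=4) (l:=6) (by decide) (by decide)]
  simp

lemma key_mem (x y : Matrix (Fin 7) (Fin 7) ℝ)
    (hx : x ∈ ({Xzeta1, Xzeta2, Xgamma21, Xgamma01} : Set (Matrix (Fin 7) (Fin 7) ℝ)))
    (hy : y ∈ ({Xzeta1, Xzeta2, Xgamma21, Xgamma01} : Set (Matrix (Fin 7) (Fin 7) ℝ))) :
    x * y - y * x ∈ Submodule.span ℝ ({Xzeta1, Xzeta2, Xgamma21, Xgamma01} :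
      Set (Matrix (Fin 7) (Fin 7) ℝ)) := by
  have m3 : Xgamma21 ∈ Submodule.span ℝ ({Xzeta1, Xzeta2, Xgamma21, Xgamma01} :
      Set (Matrix (Fin 7) (Fin 7) ℝ)) := Submodule.subset_span (by simp)
  have m4 : Xgamma01 ∈ Submodule.span ℝ ({Xzeta1, Xzeta2, Xgamma21, Xgamma01} :
      Set (Matrix (Fin 7) (Fin 7) ℝ)) := Submodule.subset_span (by simp)
  have key : ∀ a b : Matrix (Fin 7) (Fin 7) ℝ, a * b - b * a = ⁅a, b⁆ := fun a b =>
    (Ring.lie_def a b).symm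
  have rev : ∀ a b : Matrix (Fin 7) (Fin 7) ℝ, ⁅b, a⁆ = -⁅a, b⁆ := fun a b =>
    (lie_skew b a).symm
  rw [key]
  simp only [Set.mem_insert_iff, Set.mem_singleton_iff] at hx hy
  rcases hx with rfl|rfl|rfl|rfl <;> rcases hy with rfl|rfl|rfl|rfl
  · rw [lie_self]; exact Submodule.zero_mem _
  · rw [b12]; exact Submodule.zero_mem _
  · rw [b13]; exact Submodule.zero_mem _
  · rw [b14]; exact Submodule.neg_mem _ m4
  · rw [rev Xzeta1 Xzeta2, b12, neg_zero]; exact Submodule.zero_mem _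
  · rw [lie_self]; exact Submodule.zero_mem _
  · rw [b23]; exact Submodule.neg_mem _ m3
  · rw [b24]; exact Submodule.neg_mem _ m4
  · rw [rev Xzeta1 Xgamma21, b13, neg_zero]; exact Submodule.zero_mem _
  · rw [rev Xzeta2 Xgamma21, b23, neg_neg]; exact m3
  · rw [lie_self]; exact Submodule.zero_mem _
  · rw [b34]; exact Submodule.zero_mem _
  · rw [rev Xzeta1 Xgamma01, b14, neg_neg]; exact m4
  · rw [rev Xzeta2 Xgamma01, b24, neg_neg]; exact m4
  · rw [rev Xgamma21 Xgamma01, b34, neg_zero]; exact Submodule.zero_mem _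
  · rw [lie_self]; exact Submodule.zero_mem _


/-- The 4-dimensional subspace `span{X_{ζ₁}, X_{ζ₂}, X_{γ²₁}, X_{γ⁰₁}}` of `g₂` is closed
under the matrix commutator: it is a Lie subalgebra (the Lie algebra of the structure
group `G⁽²⁾_M` of the reductions in the main embeddability theorem). -/

theorem span_G2M_structure_algebra_closed :
    ∀ X ∈ Submodule.span ℝ ({Xzeta1, Xzeta2, Xgamma21, Xgamma01} :
        Set (Matrix (Fin 7) (Fin 7) ℝ)),
      ∀ Y ∈ Submodule.span ℝ ({Xzeta1, Xzeta2, Xgamma21, Xgamma01} :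
        Set (Matrix (Fin 7) (Fin 7) ℝ)),
        X * Y - Y * X ∈ Submodule.span ℝ ({Xzeta1, Xzeta2, Xgamma21, Xgamma01} :
          Set (Matrix (Fin 7) (Fin 7) ℝ)) := by
  intro X hX Y hY
  induction hX, hY using Submodule.span_induction₂ with
  | mem_mem x y hx hy => exact key_mem x y hx hy
  | zero_left y hy => simp
  | zero_right x hx => simp
  | add_left x y z hx hy hz h1 h2 =>
      have e : (x + y) * z - z * (x + y) = (x * z - z * x) + (y * z - z * y) := by
        noncomm_ring
      rw [e]; exact Submodule.add_mem _ h1 h2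
  | add_right x y z hx hy hz h1 h2 =>
      have e : x * (y + z) - (y + z) * x = (x * y - y * x) + (x * z - z * x) := by
        noncomm_ring
      rw [e]; exact Submodule.add_mem _ h1 h2
  | smul_left r x y hx hy h =>
      have e : (r • x) * y - y * (r • x) = r • (x * y - y * x) := by
        rw [smul_mul_assoc, mul_smul_comm, smul_sub]
      rw [e]; exact Submodule.smul_mem _ r h
  | smul_right r x y hx hy h =>
      have e : x * (r • y) - (r • y) * x = r • (x * y - y * x) := by
        rw [smul_mul_assoc, mul_smul_comm, smul_sub]
      rw [e]; exact Submodule.smul_mem _ r h
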